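/- Let (X, B, μ) be a Lebesgue probability space with a metric d whose open balls are measurable, assume the support of μ is not reduced to a single point, and let T : X → X be a measure-preserving transformation such that T × T is ergodic with respect to μ ⊗ μ (i.e. T is weakly mixing). Then every δ with 0 < δ < diam(supp μ) is a sensitivity constant for T: for μ⊗μ-a.e. (x,y) ∈ X² there exists n ≥ 0 with d(Tⁿx, Tⁿy) ≥ δ. -/

import Mathlib

open MeasureTheory Metric Filter
open scoped ENNReal

/-- The support of a measure on a metric space: the set of points all of whose
open balls have positive measure (the smallest closed set of full measure). -/
def msupport {X : Type*} [MeasurableSpace X] [MetricSpace X] (μ : Measure X) : Set X :=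
  {x : X | ∀ ε : ℝ, 0 < ε → 0 < μ (Metric.ball x ε)}

/-- `δ` is a sensitivity constant for `T`: `δ > 0` and for `μ⊗μ`-a.e. `(x,y)` there is
`n ≥ 0` with `d(Tⁿx,Tⁿy) ≥ δ`. -/
def IsSensitivityConstant {X : Type*} [MeasurableSpace X] [MetricSpace X]
    (T : X → X) (μ : Measure X) (δ : ℝ≥0∞) : Prop :=
  0 < δ ∧ ∀ᵐ p ∂ μ.prod μ, ∃ n : ℕ, δ ≤ edist (T^[n] p.1) (T^[n] p.2)

/-- `Δ(T)`: the supremum of the sensitivity constants of `T`. -/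
noncomputable def sensDelta {X : Type*} [MeasurableSpace X] [MetricSpace X]
    (T : X → X) (μ : Measure X) : ℝ≥0∞ :=
  sSup {δ : ℝ≥0∞ | IsSensitivityConstant T μ δ}

/-- if `T` is weakly mixing (i.e. `T × T` is ergodic for `μ ⊗ μ`), then every
`δ` with `0 < δ < diam (supp μ)` is a sensitivity constant for `T`. -/
theorem stmt_6 {X : Type*} [MeasurableSpace X] [StandardBorelSpace X] [MetricSpace X]
    (μ : Measure X) [IsProbabilityMeasure μ]
    (hballs : ∀ (z : X) (r : ℝ), MeasurableSet (Metric.ball z r))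
    (hsupp : ∃ x ∈ msupport μ, ∃ y ∈ msupport μ, x ≠ y)
    (T : X → X) (hT : MeasurePreserving T μ μ)
    (hwm : Ergodic (Prod.map T T) (μ.prod μ)) :
    ∀ δ : ℝ≥0∞, 0 < δ → δ < EMetric.diam (msupport μ) →
      ∀ᵐ p ∂ μ.prod μ, ∃ n : ℕ, δ ≤ edist (T^[n] p.1) (T^[n] p.2) := by
  intro δ hδ0 hδd
  -- find u v in msupport with δ < edist u v
  obtain ⟨u, hu, v, hv, huv⟩ : ∃ u ∈ msupport μ, ∃ v ∈ msupport μ, δ < edist u v := by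
    rw [EMetric.diam, Metric.ediam] at hδd
    simp only [lt_iSup_iff] at hδd
    obtain ⟨u, hu, v, hv, h⟩ := hδd
    exact ⟨u, hu, v, hv, h⟩
  set c : ℝ≥0∞ := min (edist u v) (δ + 1) with hc
  have hδtop : δ ≠ ⊤ := huv.ne_top
  have hδc : δ < c := lt_min huv (ENNReal.lt_add_right hδtop one_ne_zero)
  have hcle : c ≤ edist u v := min_le_left _ _
  have hcne : c ≠ ⊤ := by
    have h1 : δ + 1 ≠ ⊤ := by simp [ENNReal.add_ne_top, hδtop]
    exact ne_top_of_le_ne_top h1 (min_le_right _ _)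
  set ε : ℝ≥0∞ := (c - δ) / 2 with hε
  have hε0 : 0 < ε := ENNReal.div_pos (tsub_pos_of_lt hδc).ne' (by norm_num)
  have hεne : ε ≠ ⊤ :=
    ne_top_of_le_ne_top hcne ((ENNReal.half_le_self).trans tsub_le_self)
  have hεR : 0 < ε.toReal := ENNReal.toReal_pos hε0.ne' hεne
  set A : Set (X × X) := (Metric.ball u ε.toReal) ×ˢ (Metric.ball v ε.toReal) with hA
  have hAmeas : MeasurableSet A := (hballs u _).prod (hballs v _)
  have hApos : 0 < (μ.prod μ) A := by
    rw [hA, Measure.prod_prod]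
    exact ENNReal.mul_pos (hu _ hεR).ne' (hv _ hεR).ne'
  -- key geometric fact
  have hgeo : ∀ a ∈ Metric.ball u ε.toReal, ∀ b ∈ Metric.ball v ε.toReal,
      δ ≤ edist a b := by
    intro a ha b hb
    by_contra hlt
    push_neg at hlt
    have hua : edist u a < ε := by
      rw [← ENNReal.ofReal_toReal hεne]
      exact edist_lt_ofReal.mpr (by rw [dist_comm]; exact Metric.mem_ball.mp ha)
    have hbv : edist b v < ε := by
      rw [← ENNReal.ofReal_toReal hεne]
      exact edist_lt_ofReal.mpr (Metric.mem_ball.mp hb)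
    have : edist u v < ε + δ + ε :=
      (edist_triangle4 u a b v).trans_lt (by
        exact ENNReal.add_lt_add (ENNReal.add_lt_add hua hlt) hbv)
    have h2 : ε + δ + ε = c := by
      have : ε + ε = c - δ := by
        rw [hε]; rw [← two_mul, ENNReal.mul_div_cancel'] <;> norm_num
      calc ε + δ + ε = δ + (ε + ε) := by ring
        _ = δ + (c - δ) := by rw [this]
        _ = c := by rw [add_tsub_cancel_of_le hδc.le]
    rw [h2] at this
    exact absurd (hcle.trans_lt this) (lt_irrefl _)
  -- the set of points that eventually visit A
  set f : X × X → X × X := Prod.map T T with hf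
  have hfmeas : Measurable f := hwm.measurable
  set s : Set (X × X) := ⋃ n : ℕ, f^[n] ⁻¹' A with hs
  have hsmeas : MeasurableSet s :=
    MeasurableSet.iUnion fun n => hAmeas.preimage (hfmeas.iterate n)
  have hsub : f ⁻¹' s ⊆ s := by
    rw [hs, Set.preimage_iUnion]
    refine Set.iUnion_subset fun n => ?_
    have : f ⁻¹' (f^[n] ⁻¹' A) = f^[n+1] ⁻¹' A := by
      rw [← Set.preimage_comp, Function.iterate_succ]
    rw [this]
    exact Set.subset_iUnion (fun n => f^[n] ⁻¹' A) (n + 1)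
  have := hwm.ae_empty_or_univ_of_preimage_ae_le hsmeas.nullMeasurableSet
    (HasSubset.Subset.eventuallyLE hsub)
  rcases this with h | h
  · exfalso
    have hAs : A ⊆ s := by
      have : f^[0] ⁻¹' A = A := by simp
      rw [hs]; exact this ▸ Set.subset_iUnion (fun n => f^[n] ⁻¹' A) 0
    have : (μ.prod μ) s = 0 := by
      rw [measure_congr h, measure_empty]
    exact absurd ((measure_mono hAs).trans this.le) (not_le.mpr hApos)
  · have huniv : ∀ᵐ p ∂ μ.prod μ, p ∈ s := by
      filter_upwards [h.mem_iff] with p hp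
      exact hp.mpr (Set.mem_univ p)
    filter_upwards [huniv] with p hp
    obtain ⟨n, hn⟩ := Set.mem_iUnion.mp hp
    refine ⟨n, ?_⟩
    have hiter : f^[n] p = (T^[n] p.1, T^[n] p.2) := by
      rw [hf, Prod.map_iterate]; rfl
    rw [Set.mem_preimage, hiter] at hn
    exact hgeo _ hn.1 _ hn.2
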